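/- Let p, q be odd integers with 3 ≤ p ≤ q. Then the polynomial g_{p,q}(t) = Ψ_p(t)Ψ_q(t)Φ_6(t^{(p−1)(q−1)/2}) − Ψ_{pq}(t) is divisible by t(1−t)²Ψ_{q−1}(t) in ℚ[t], and the quotient f_{p,q}(t) = g_{p,q}(t)/(t(1−t)²Ψ_{q−1}(t)) is a palindromic polynomial of degree (p−1)q − 3. -/

import Mathlib

set_option maxHeartbeats 2000000

open Polynomial

/-- `Ψ_m(t) = 1 + t + ⋯ + t^{m-1} ∈ ℚ[t]`. -/
noncomputable def PsiQ (m : ℕ) : Polynomial ℚ :=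
  ∑ i ∈ Finset.range m, Polynomial.X ^ i

/-- `g_{p,q}(t) = Ψ_p(t)Ψ_q(t)Φ_6(t^{(p-1)(q-1)/2}) - Ψ_{pq}(t) ∈ ℚ[t]`. -/
noncomputable def gPQ (p q : ℕ) : Polynomial ℚ :=
  PsiQ p * PsiQ q *
      (Polynomial.cyclotomic 6 ℚ).comp (Polynomial.X ^ ((p - 1) * (q - 1) / 2)) -
    PsiQ (p * q)

lemma cyclo3 : cyclotomic 3 ℚ = X^2 + X + 1 := by
  rw [cyclotomic_prime]
  simp [Finset.sum_range_succ]
  ring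

lemma cyclo6 : cyclotomic 6 ℚ = X^2 - X + 1 := by
  have h := cyclotomic_expand_eq_cyclotomic_mul (p := 2) (n := 3) (by norm_num) (by norm_num) (R := ℚ)
  rw [cyclo3] at h
  have h2 : expand ℚ 2 (X^2 + X + 1 : ℚ[X]) = X^4 + X^2 + 1 := by
    simp [map_add, expand_X]
    ring
  rw [h2] at h
  have h3 : (X^4 + X^2 + 1 : ℚ[X]) = (X^2 - X + 1) * (X^2 + X + 1) := by ring
  have hne : (X^2 + X + 1 : ℚ[X]) ≠ 0 := by
    intro hc
    have := congrArg (eval 1) hc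
    norm_num at this
  have h4 : cyclotomic (3*2) ℚ * (X^2+X+1) = (X^2 - X + 1) * (X^2+X+1) := by
    rw [← h, h3]
  have := mul_right_cancel₀ hne h4
  simpa using this

lemma Xsub_ne : (X - 1 : ℚ[X]) ≠ 0 := by
  intro hc
  have := congrArg (eval 0) hc
  norm_num at this

lemma psiMul (m : ℕ) : PsiQ m * (X - 1) = X ^ m - 1 := by
  simpa [PsiQ] using geom_sum_mul (X : ℚ[X]) m

lemma psi_eval_one (m : ℕ) : (PsiQ m).eval 1 = (m : ℚ) := by
  simp [PsiQ, eval_finset_sum]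

lemma geomY (m n : ℕ) :
    (∑ i ∈ Finset.range n, (X:ℚ[X])^(m*i)) * (X^m - 1) = X^(m*n) - 1 := by
  have := geom_sum_mul ((X:ℚ[X])^m) n
  simpa [← pow_mul] using this

noncomputable def GEx (a b k : ℕ) : ℚ[X] :=
  X^(4*k+2*a+2*b+1) + X^(2*a+2*b+2) - X^(4*k+2*a+1) - X^(4*k+2*b+1)
  - X^(2*k+2*a+2*b+2) + X^(4*k) + X^(2*k+2*a+1) + X^(2*k+2*b+1)
  - X^(2*k) - X^(2*a+1) - X^(2*b+1) + X^1

lemma GEx_deg (a b k : ℕ) (ha : 1 ≤ a) (hb : 1 ≤ b) (hk : 1 ≤ k) :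
    (GEx a b k).natDegree = 4*k+2*a+2*b+1 := by
  have h1 : GEx a b k = X^(4*k+2*a+2*b+1) +
      (X^(2*a+2*b+2) - X^(4*k+2*a+1) - X^(4*k+2*b+1)
      - X^(2*k+2*a+2*b+2) + X^(4*k) + X^(2*k+2*a+1) + X^(2*k+2*b+1)
      - X^(2*k) - X^(2*a+1) - X^(2*b+1) + X^1) := by
    unfold GEx; ring
  rw [h1, natDegree_add_eq_left_of_natDegree_lt, natDegree_X_pow]
  rw [natDegree_X_pow]
  have hbd : (X^(2*a+2*b+2) - X^(4*k+2*a+1) - X^(4*k+2*b+1)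
      - X^(2*k+2*a+2*b+2) + X^(4*k) + X^(2*k+2*a+1) + X^(2*k+2*b+1)
      - X^(2*k) - X^(2*a+1) - X^(2*b+1) + X^1 : ℚ[X]).natDegree ≤ 4*k+2*a+2*b := by
    have hadd : ∀ (u v : ℚ[X]) (n : ℕ), u.natDegree ≤ n → v.natDegree ≤ n →
        (u+v).natDegree ≤ n := fun u v n hu hv => (natDegree_add_le u v).trans (max_le hu hv)
    have hsub : ∀ (u v : ℚ[X]) (n : ℕ), u.natDegree ≤ n → v.natDegree ≤ n →
        (u-v).natDegree ≤ n := fun u v n hu hv => (natDegree_sub_le u v).trans (max_le hu hv)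
    have hpw : ∀ (e n : ℕ), e ≤ n → ((X:ℚ[X])^e).natDegree ≤ n := by
      intro e n h; rw [natDegree_X_pow]; exact h
    have hng : ∀ (u : ℚ[X]) (n : ℕ), u.natDegree ≤ n → (-u).natDegree ≤ n := by
      intro u n h; rwa [natDegree_neg]
    repeat first
      | with_reducible apply hadd
      | with_reducible apply hsub
      | with_reducible apply hng
      | (with_reducible apply hpw; omega)
  omega

lemma GEx_reflect (a b k' : ℕ) :
    X * reflect (4*(k'+1)+2*a+2*b+1) (GEx a b (k'+1)) = GEx a b (k'+1) := by
  unfold GEx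
  simp only [reflect_add, reflect_sub, reflect_monomial]
  rw [show revAt (4*(k'+1)+2*a+2*b+1) (4*(k'+1)+2*a+2*b+1) = 0 by rw [revAt_le (by omega)]; omega]
  rw [show revAt (4*(k'+1)+2*a+2*b+1) (2*a+2*b+2) = 4*k'+3 by rw [revAt_le (by omega)]; omega]
  rw [show revAt (4*(k'+1)+2*a+2*b+1) (4*(k'+1)+2*a+1) = 2*b by rw [revAt_le (by omega)]; omega]
  rw [show revAt (4*(k'+1)+2*a+2*b+1) (4*(k'+1)+2*b+1) = 2*a by rw [revAt_le (by omega)]; omega]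
  rw [show revAt (4*(k'+1)+2*a+2*b+1) (2*(k'+1)+2*a+2*b+2) = 2*k'+1 by rw [revAt_le (by omega)]; omega]
  rw [show revAt (4*(k'+1)+2*a+2*b+1) (4*(k'+1)) = 2*a+2*b+1 by rw [revAt_le (by omega)]; omega]
  rw [show revAt (4*(k'+1)+2*a+2*b+1) (2*(k'+1)+2*a+1) = 2*k'+2*b+2 by rw [revAt_le (by omega)]; omega]
  rw [show revAt (4*(k'+1)+2*a+2*b+1) (2*(k'+1)+2*b+1) = 2*k'+2*a+2 by rw [revAt_le (by omega)]; omega]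
  rw [show revAt (4*(k'+1)+2*a+2*b+1) (2*(k'+1)) = 2*k'+2*a+2*b+3 by rw [revAt_le (by omega)]; omega]
  rw [show revAt (4*(k'+1)+2*a+2*b+1) (2*a+1) = 4*k'+2*b+4 by rw [revAt_le (by omega)]; omega]
  rw [show revAt (4*(k'+1)+2*a+2*b+1) (2*b+1) = 4*k'+2*a+4 by rw [revAt_le (by omega)]; omega]
  rw [show revAt (4*(k'+1)+2*a+2*b+1) 1 = 4*(k'+1)+2*a+2*b by rw [revAt_le (by omega)]; omega]
  ring

lemma rev_Xsub1 : reverse (X - 1 : ℚ[X]) = 1 - X := by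
  have h1 : (X - 1 : ℚ[X]).natDegree = 1 := by simpa using natDegree_X_sub_C (1:ℚ)
  have h2 : reverse (X - 1 : ℚ[X]) = reflect 1 (X - 1) := by rw [← h1]; rfl
  rw [h2, show (X - 1 : ℚ[X]) = X^1 - X^0 by ring, reflect_sub, reflect_monomial,
    reflect_monomial, revAt_le (le_refl 1), revAt_le (Nat.zero_le 1)]
  norm_num

lemma rev_XpowSub1 (n : ℕ) : reverse (X^n - 1 : ℚ[X]) = 1 - X^n := by
  have h1 : (X^n - 1 : ℚ[X]).natDegree = n := by
    simpa using natDegree_X_pow_sub_C (n := n) (r := (1:ℚ))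
  have h2 : reverse (X^n - 1 : ℚ[X]) = reflect ((X^n - 1 : ℚ[X]).natDegree) (X^n - 1) := rfl
  rw [h1] at h2
  rw [h2, show (X^n - 1 : ℚ[X]) = X^n - X^0 by ring, reflect_sub, reflect_monomial,
    reflect_monomial, revAt_le (le_refl n), revAt_le (Nat.zero_le n)]
  simp

/-- For odd `3 ≤ p ≤ q`, `g_{p,q}` is divisible by `t(1-t)²Ψ_{q-1}` in `ℚ[t]` and
the quotient `f_{p,q}` is a palindromic polynomial of degree `(p-1)q - 3`. -/
theorem fpq_palindromic (p q : ℕ) (hp : Odd p) (hq : Odd q) (h3 : 3 ≤ p) (hpq : p ≤ q) :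
    ∃ f : Polynomial ℚ,
      gPQ p q = Polynomial.X * (1 - Polynomial.X) ^ 2 * PsiQ (q - 1) * f ∧
      f ≠ 0 ∧ f.natDegree = (p - 1) * q - 3 ∧
      ∀ i ≤ f.natDegree, f.coeff i = f.coeff (f.natDegree - i) := by
  obtain ⟨a, ha⟩ := hp
  obtain ⟨b, hb⟩ := hq
  subst ha hb
  have ha1 : 1 ≤ a := by omega
  have hb1 : 1 ≤ b := by omega
  have hc : (2*a+1-1) * (2*b+1-1) / 2 = 2*(a*b) := by
    have h4 : (2*a+1-1) * (2*b+1-1) = 2*(a*b) * 2 := by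
      simp only [Nat.add_sub_cancel]; ring
    rw [h4, Nat.mul_div_cancel _ (by norm_num)]
  set U : ℚ[X] := ∑ i ∈ Finset.range (2*a+1), (X:ℚ[X])^i * PsiQ ((2*b-1)*i) with hUdef
  set T : ℚ[X] := ∑ i ∈ Finset.range (2*a+1), (X:ℚ[X])^(2*b*i) with hTdef
  set S : ℚ[X] := ∑ i ∈ Finset.range a, (X:ℚ[X])^(2*b*i) with hSdef
  set S' : ℚ[X] := ∑ i ∈ Finset.range (2*a), (X:ℚ[X])^(2*b*i) with hS'def
  set hh : ℚ[X] := -U - PsiQ (2*a+1) * X^(2*b) * S'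
      + PsiQ (2*a+1) * PsiQ (2*b+1) * X^(2*(a*b)) * S with hhdef
  have hU : U * (X - 1) = T - PsiQ (2*a+1) := by
    rw [hUdef, hTdef, Finset.sum_mul, PsiQ, ← Finset.sum_sub_distrib]
    refine Finset.sum_congr rfl fun i hi => ?_
    have he : 2*b*i = ((2*b-1)*i) + i := by
      have h1 : 2*b - 1 + 1 = 2*b := by omega
      calc 2*b*i = (2*b-1+1)*i := by rw [h1]
      _ = (2*b-1)*i + i := by ring
    rw [he, pow_add]
    linear_combination (X:ℚ[X])^i * psiMul ((2*b-1)*i)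
  have hT := geomY (2*b) (2*a+1)
  have hS := geomY (2*b) a
  have hS' := geomY (2*b) (2*a)
  rw [← hTdef] at hT
  rw [← hSdef] at hS
  rw [← hS'def] at hS'
  have E1 : gPQ (2*a+1) (2*b+1) * (X-1)^2 = GEx a b (a*b) := by
    rw [gPQ, hc, cyclo6]
    simp only [sub_comp, add_comp, pow_comp, X_comp, one_comp]
    unfold GEx
    linear_combination
      ((X-1) * PsiQ (2*b+1) * ((X^(2*(a*b)))^2 - X^(2*(a*b)) + 1)) * psiMul (2*a+1)
      + ((X^(2*a+1)-1) * ((X^(2*(a*b)))^2 - X^(2*(a*b)) + 1)) * psiMul (2*b+1)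
      - (X-1) * psiMul ((2*a+1)*(2*b+1))
  have E0 : gPQ (2*a+1) (2*b+1) = (X^(2*b) - 1) * hh := by
    apply mul_right_cancel₀ (pow_ne_zero 2 Xsub_ne)
    rw [E1, hhdef]
    unfold GEx
    linear_combination ((X^(2*b)-1)*(X-1)) * hU + (X-1) * hT
      - ((X^(2*b)-1) - X^(2*b)*(X-1)*(X^(4*(a*b))-1)
          + PsiQ (2*b+1)*X^(2*(a*b))*(X-1)*(X^(2*(a*b))-1)) * psiMul (2*a+1)
      + (PsiQ (2*a+1) * X^(2*b) * (X-1)^2) * hS'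
      - (PsiQ (2*a+1) * PsiQ (2*b+1) * X^(2*(a*b)) * (X-1)^2) * hS
      - (X^(2*(a*b))*(X^(2*(a*b))-1)*(X^(2*a+1)-1)) * psiMul (2*b+1)
  -- evaluation facts for hh
  have hU0 : U.eval 0 = 0 := by
    rw [hUdef, eval_finset_sum]
    apply Finset.sum_eq_zero
    intro i _
    rcases Nat.eq_zero_or_pos i with rfl | hip
    · simp [PsiQ]
    · simp [zero_pow hip.ne']
  have hU1 : U.eval 1 = (2*(b:ℚ)-1) * ((2*(a:ℚ)+1)*(a:ℚ)) := by
    rw [hUdef, eval_finset_sum]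
    have hterm : ∀ i ∈ Finset.range (2*a+1),
        ((X:ℚ[X])^i * PsiQ ((2*b-1)*i)).eval 1 = (2*(b:ℚ)-1) * (i:ℚ) := by
      intro i _
      simp only [eval_mul, eval_pow, eval_X, one_pow, one_mul, psi_eval_one]
      push_cast [Nat.cast_sub (show 1 ≤ 2*b by omega)]
      ring
    rw [Finset.sum_congr rfl hterm, ← Finset.mul_sum]
    have hsum : ∑ i ∈ Finset.range (2*a+1), i = (2*a+1)*a := by
      have h7 := Finset.sum_range_id_mul_two (2*a+1)
      have h8 : (2*a+1) * (2*a+1-1) = ((2*a+1)*a)*2 := by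
        simp only [Nat.add_sub_cancel]; ring
      rw [h8] at h7
      omega
    have hsumq : ∑ i ∈ Finset.range (2*a+1), (i:ℚ) = ((2*(a:ℚ)+1)*(a:ℚ)) := by
      rw [← Nat.cast_sum, hsum]
      push_cast
      ring
    rw [hsumq]
  have hh0 : hh.eval 0 = 0 := by
    have e1 : ((X:ℚ[X])^(2*b)).eval 0 = 0 := by
      simp [zero_pow (show 2*b ≠ 0 by omega)]
    have e2 : ((X:ℚ[X])^(2*(a*b))).eval 0 = 0 := by
      rw [eval_pow, eval_X]
      exact zero_pow (Nat.mul_ne_zero (by omega)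
        (Nat.mul_ne_zero (by omega) (by omega)))
    rw [hhdef]
    simp only [eval_add, eval_sub, eval_neg, eval_mul, e1, e2, hU0, mul_zero, zero_mul,
      neg_zero, sub_zero, add_zero, zero_add]
  have hh1 : hh.eval 1 = 0 := by
    rw [hhdef, hSdef, hS'def]
    simp only [eval_add, eval_sub, eval_neg, eval_mul, eval_pow, eval_X, eval_finset_sum,
      one_pow, psi_eval_one, hU1, Finset.sum_const, Finset.card_range, nsmul_eq_mul, mul_one]
    push_cast
    ring
  have hXdvd : X ∣ hh := X_dvd_iff.mpr (by rw [coeff_zero_eq_eval_zero, hh0])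
  have hX1dvd : X - 1 ∣ hh := by
    have := dvd_iff_isRoot.mpr (show IsRoot hh 1 from hh1)
    simpa using this
  have hcop : IsCoprime (X : ℚ[X]) (X - 1) := ⟨1, -1, by ring⟩
  obtain ⟨f, hf⟩ := hcop.mul_dvd hXdvd hX1dvd
  -- degrees
  obtain ⟨k, hk⟩ : ∃ k, a*b = k := ⟨_, rfl⟩
  have hk1 : 1 ≤ k := by
    rw [← hk]
    exact Nat.mul_pos ha1 hb1
  rw [hk] at E1
  have hGdeg : (GEx a b k).natDegree = 4*k+2*a+2*b+1 := GEx_deg a b k ha1 hb1 hk1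
  have hGne : GEx a b k ≠ 0 := by
    intro h0
    rw [h0, natDegree_zero] at hGdeg
    omega
  have hgne : gPQ (2*a+1) (2*b+1) ≠ 0 := by
    intro h0
    rw [h0, zero_mul] at E1
    exact hGne E1.symm
  have hfne : f ≠ 0 := by
    intro h0
    rw [h0, mul_zero] at hf
    rw [hf, mul_zero] at E0
    exact hgne E0
  have hMne : (X^(2*b) - 1 : ℚ[X]) ≠ 0 := by
    intro h0
    have := congrArg (eval 0) h0
    simp [zero_pow (show 2*b ≠ 0 by omega)] at this
  have hMdeg : (X^(2*b) - 1 : ℚ[X]).natDegree = 2*b := by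
    simpa using natDegree_X_pow_sub_C (n := 2*b) (r := (1:ℚ))
  have hX1deg : (X - 1 : ℚ[X]).natDegree = 1 := by simpa using natDegree_X_sub_C (1:ℚ)
  have hgdeg : (gPQ (2*a+1) (2*b+1)).natDegree = 4*k+2*a+2*b-1 := by
    have h5 := natDegree_mul hgne (pow_ne_zero 2 Xsub_ne)
    rw [E1, hGdeg, natDegree_pow, hX1deg] at h5
    omega
  have hfdeg : f.natDegree = 4*k+2*a-3 := by
    have hXf : (X*(X-1)*f : ℚ[X]) ≠ 0 :=
      mul_ne_zero (mul_ne_zero X_ne_zero Xsub_ne) hfne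
    have h6 : (gPQ (2*a+1) (2*b+1)).natDegree
        = (X^(2*b) - 1 : ℚ[X]).natDegree + (X*(X-1)*f : ℚ[X]).natDegree := by
      rw [E0, hf, natDegree_mul hMne hXf]
    rw [natDegree_mul (mul_ne_zero X_ne_zero Xsub_ne) hfne,
      natDegree_mul X_ne_zero Xsub_ne, natDegree_X, hX1deg, hMdeg, hgdeg] at h6
    omega
  refine ⟨f, ?_, hfne, ?_, ?_⟩
  · -- main factorization
    have hq1 : 2*b+1-1 = 2*b := by omega
    rw [hq1, E0, hf]
    linear_combination (-(X*(X-1)*f)) * psiMul (2*b)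
  · -- degree value
    have ht : (2*a+1-1)*(2*b+1) = 4*k+2*a := by
      rw [← hk]
      simp only [Nat.add_sub_cancel]
      ring
    rw [ht, hfdeg]
  · -- palindromicity
    obtain ⟨k', rfl⟩ : ∃ k', k = k'+1 := ⟨k-1, by omega⟩
    have hrefl := GEx_reflect a b k'
    have hrevG : reverse (GEx a b (k'+1))
        = reflect (4*(k'+1)+2*a+2*b+1) (GEx a b (k'+1)) := by
      rw [← hGdeg]; rfl
    have hGEf : GEx a b (k'+1)
        = X * (((X-1)*(X-1)) * (((X - 1) * (X^(2*b)-1)) * f)) := by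
      rw [← E1, E0, hf]; ring
    have hrevGE : reverse (GEx a b (k'+1))
        = ((1-X)*(1-X)) * (((1-X)*(1-X^(2*b))) * reverse f) := by
      rw [hGEf, reverse_X_mul]
      simp only [reverse_mul_of_domain, rev_Xsub1, rev_XpowSub1]
    have hkey : (X*((X-1)*(X-1))*((X-1)*(X^(2*b)-1))) * reverse f
        = (X*((X-1)*(X-1))*((X-1)*(X^(2*b)-1))) * f := by
      have step : X * (((1-X)*(1-X)) * (((1-X)*(1-X^(2*b))) * reverse f))
          = X * (((X-1)*(X-1)) * (((X - 1) * (X^(2*b)-1)) * f)) := by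
        rw [← hrevGE, hrevG, hrefl, ← hGEf]
      linear_combination step
    have hAne : (X*((X-1)*(X-1))*((X-1)*(X^(2*b)-1)) : ℚ[X]) ≠ 0 :=
      mul_ne_zero (mul_ne_zero X_ne_zero (mul_ne_zero Xsub_ne Xsub_ne))
        (mul_ne_zero Xsub_ne hMne)
    have hrevf : reverse f = f := mul_left_cancel₀ hAne hkey
    intro i hi
    have hcr := coeff_reverse f i
    rw [hrevf, revAt_le hi] at hcr
    exact hcr
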